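/- Let X be a completely regular Hausdorff space, K ⊆ X compact, and f ∈ C(X) such that sup_X |fg| ≤ sup_K |g| for every bounded continuous g. Then {x : f(x) ≠ 0} ⊆ K. -/

import Mathlib

open Set unitInterval

/-- Let `X` be a completely regular Hausdorff space, `K ⊆ X` compact and `f` continuous
with `sup_X ‖f·g‖ ≤ sup_K ‖g‖` for every bounded continuous `g`. Then the nonvanishing
set of `f` is contained in `K`. -/
theorem stmt2 {X : Type*} [TopologicalSpace X] [T2Space X] [CompletelyRegularSpace X]
    (K : Set X) (hK : IsCompact K) (f : C(X, ℂ))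
    (hsup : ∀ g : BoundedContinuousFunction X ℂ, ∀ x : X, ‖f x * g x‖ ≤ ⨆ y : K, ‖g y‖) :
    {x : X | f x ≠ 0} ⊆ K := by
  intro x hx
  by_contra hxK
  obtain ⟨u, hu, hux, huK⟩ :=
    CompletelyRegularSpace.completely_regular x K hK.isClosed hxK
  set g : BoundedContinuousFunction X ℂ :=
    { toFun := fun y => ((1 - (u y : ℝ) : ℝ) : ℂ)
      continuous_toFun := by
        exact Complex.continuous_ofReal.comp
          (continuous_const.sub (continuous_subtype_val.comp hu))
      map_bounded' := by
        refine ⟨2, fun a b => ?_⟩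
        simp only [Complex.dist_eq]
        rw [show ((1 - (u a : ℝ) : ℝ) : ℂ) - ((1 - (u b : ℝ) : ℝ) : ℂ)
            = (((u b : ℝ) - (u a : ℝ) : ℝ) : ℂ) by push_cast; ring]
        rw [Complex.norm_real, Real.norm_eq_abs]
        rw [abs_le]
        have ha1 := unitInterval.nonneg (u a); have ha2 := unitInterval.le_one (u a)
        have hb1 := unitInterval.nonneg (u b); have hb2 := unitInterval.le_one (u b)
        constructor <;> linarith }
  have h := hsup g x
  have hgx : g x = 1 := by
    show ((1 - (u x : ℝ) : ℝ) : ℂ) = 1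
    rw [hux]; norm_num
  have hgK : ∀ y : K, g y = 0 := by
    intro ⟨y, hy⟩
    have h1 : u y = 1 := huK hy
    show ((1 - (u y : ℝ) : ℝ) : ℂ) = 0
    rw [h1]; norm_num
  have hsup0 : (⨆ y : K, ‖g y‖) ≤ 0 := by
    apply Real.iSup_le
    · intro y; rw [hgK y]; simp
    · rfl
  rw [hgx, mul_one] at h
  have : ‖f x‖ > 0 := norm_pos_iff.mpr hx
  linarith
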